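/- The assignment A ↦ type(A) induces a bijection from the set of equivalence classes of EL-charts onto P_{m,n,d}. -/
import Mathlib


namespace ELChart

/-- An EL-chart (for parameters `d`, `n` and `mfun τ = m_τ`): a non-empty subset
`A ⊆ ℤ^(d) = (ℤ/dℤ) × ℤ` which is bounded below and satisfies `f(A) ⊆ A` and `A + n ⊆ A`,
where `f (τ, x) = (τ + 1, x + m_τ)`. -/
def IsChart (d n : ℕ) (mfun : ZMod d → ℤ) (A : Set (ZMod d × ℤ)) : Prop :=
  A.Nonempty ∧ (∃ c : ℤ, ∀ p ∈ A, c ≤ p.2) ∧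
    (∀ p ∈ A, ((p.1 + 1 : ZMod d), p.2 + mfun p.1) ∈ A) ∧
    (∀ p ∈ A, (p.1, p.2 + (n : ℤ)) ∈ A)

/-- `B = A ∖ (A + n)`. -/
def Bset (d n : ℕ) (A : Set (ZMod d × ℤ)) : Set (ZMod d × ℤ) :=
  {p | p ∈ A ∧ (p.1, p.2 - (n : ℤ)) ∉ A}

/-- The shift `A + z` of a subset of `ℤ^(d)`. -/
def shift (d : ℕ) (A : Set (ZMod d × ℤ)) (z : ℤ) : Set (ZMod d × ℤ) :=
  (fun p : ZMod d × ℤ => (p.1, p.2 + z)) '' A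

/-- Two EL-charts are equivalent if they differ by a shift. -/
def ChartEquiv (d : ℕ) (A A' : Set (ZMod d × ℤ)) : Prop :=
  ∃ z : ℤ, shift d A z = A'

/-- The sequence `b 0, b 1, …` associated with an EL-chart: `b 0 = min B_(0)` and `b (i+1)`
is the unique element of `B` of the form `f (b i) − c * n` with `c` a non-negative integer. -/
noncomputable def bseq (d n : ℕ) (mfun : ZMod d → ℤ) (A : Set (ZMod d × ℤ)) :
    ℕ → ZMod d × ℤ
  | 0 => ((0 : ZMod d), sInf {x : ℤ | ((0 : ZMod d), x) ∈ Bset d n A})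
  | i + 1 =>
    ((bseq d n mfun A i).1 + 1,
      sInf {y : ℤ | ((bseq d n mfun A i).1 + 1, y) ∈ Bset d n A ∧
        ((bseq d n mfun A i).2 + mfun (bseq d n mfun A i).1 - y) % (n : ℤ) = 0 ∧
        y ≤ (bseq d n mfun A i).2 + mfun (bseq d n mfun A i).1})

/-- The entry `μ'_k` (for `1 ≤ k ≤ d*n`) of the type of an EL-chart: the non-negative integer
with `b k = f (b (k-1)) − μ'_k * n`. -/
noncomputable def typeInt (d n : ℕ) (mfun : ZMod d → ℤ) (A : Set (ZMod d × ℤ)) (k : ℕ) : ℤ :=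
  ((bseq d n mfun A (k - 1)).2 + mfun (bseq d n mfun A (k - 1)).1
    - (bseq d n mfun A k).2) / (n : ℤ)

/-- The type of an EL-chart as a tuple: `μ'_{τ,i} = μ'_{τ + (i−1)d}` where the `Fin d`-index
`τ` corresponds to `τ + 1 ∈ {1, …, d}` and the `Fin n`-index `i` to `i + 1 ∈ {1, …, n}`. -/
noncomputable def typeTup (d n : ℕ) (mfun : ZMod d → ℤ) (A : Set (ZMod d × ℤ)) :
    Fin d → Fin n → ℤ :=
  fun τ i => typeInt d n mfun A (τ.val + 1 + i.val * d)

/-- The entry `μ'_{τ',i'}` of the type of an EL-chart attached to an element `p = b_{τ',i'}`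
of `B`: if `q ∈ B` is the (unique) predecessor of `p`, i.e. the element with
`p = f q − c * n` for a non-negative integer `c`, then `muOf p = c`. -/
noncomputable def muOf (d n : ℕ) (mfun : ZMod d → ℤ) (A : Set (ZMod d × ℤ))
    (p : ZMod d × ℤ) : ℤ :=
  (sInf {y : ℤ | ((p.1 - 1 : ZMod d), y) ∈ Bset d n A ∧
      (y + mfun (p.1 - 1) - p.2) % (n : ℤ) = 0 ∧ p.2 ≤ y + mfun (p.1 - 1)}
    + mfun (p.1 - 1) - p.2) / (n : ℤ)

/-- The `i`-th largest element `b̃_{τ,i}` of `B_(τ)` (1-indexed: `i ∈ {1, …, n}`): the unique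
element of `B_(τ)` with exactly `i − 1` elements of `B_(τ)` above it. -/
noncomputable def btilde (d n : ℕ) (A : Set (ZMod d × ℤ)) (τ : ZMod d) (i : ℕ) : ℤ :=
  sInf {y : ℤ | (τ, y) ∈ Bset d n A ∧
    Set.ncard {z : ℤ | (τ, z) ∈ Bset d n A ∧ y < z} = i - 1}

/-- The cotype of an EL-chart as a tuple: `μ̃_{τ,i} = μ'_{τ',i'}` where `b̃_{τ,i} = b_{τ',i'}`,
i.e. the type entry attached to the `i`-th largest element of `B_(τ)`. -/
noncomputable def cotypeTup (d n : ℕ) (mfun : ZMod d → ℤ) (A : Set (ZMod d × ℤ)) :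
    Fin d → Fin n → ℤ :=
  fun τ i =>
    muOf d n mfun A (((τ.val + 1 : ℕ) : ZMod d),
      btilde d n A ((τ.val + 1 : ℕ) : ZMod d) (i.val + 1))

/-- Membership in `P_{m,n,d}`: all entries are non-negative and
`Σ_{i=1}^k Σ_{τ=1}^d μ_{τ,i} ≤ k*m/n` for `k = 1, …, n`, with equality for `k = n`. -/
def memP (d n m : ℕ) (μ : Fin d → Fin n → ℤ) : Prop :=
  (∀ τ i, 0 ≤ μ τ i) ∧
    (∀ k : ℕ, 1 ≤ k → k ≤ n →
      (n : ℤ) * ∑ τ : Fin d, ∑ i : Fin n, (if i.val + 1 ≤ k then μ τ i else 0)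
        ≤ (k : ℤ) * (m : ℤ)) ∧
    (∑ τ : Fin d, ∑ i : Fin n, μ τ i) = (m : ℤ)

/-- An EL-chart is normalised if `Σ_{b ∈ B_(0)} |b| = n(n−1)/2`. -/
def IsNormalised (d n : ℕ) (A : Set (ZMod d × ℤ)) : Prop :=
  ∑ᶠ x ∈ {x : ℤ | ((0 : ZMod d), x) ∈ Bset d n A}, x = ((n * (n - 1) / 2 : ℕ) : ℤ)

/-- The dominant rearrangement of a tuple: each component is sorted weakly decreasingly. -/
def domOf (d n : ℕ) (μ : Fin d → Fin n → ℤ) : Fin d → Fin n → ℤ :=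
  fun τ i => μ τ (Tuple.sort (fun j => -(μ τ j)) i)

/-- A tuple is dominant if each of its `d` components is weakly decreasing. -/
def IsDom (d n : ℕ) (μ : Fin d → Fin n → ℤ) : Prop :=
  ∀ τ : Fin d, ∀ i j : Fin n, i ≤ j → μ τ j ≤ μ τ i

end ELChart

open ELChart

namespace ELP

open Finset

variable {d n m : ℕ} {mfun : ZMod d → ℤ} {A : Set (ZMod d × ℤ)}

/-- The residue class of `r` in copy `τ`, intersected with `A`. -/
def cls (n : ℕ) {d : ℕ} (A : Set (ZMod d × ℤ)) (τ : ZMod d) (r : ℤ) : Set ℤ :=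
  {y | (τ, y) ∈ A ∧ (n : ℤ) ∣ (y - r)}

noncomputable def bmin (n : ℕ) {d : ℕ} (A : Set (ZMod d × ℤ)) (τ : ZMod d) (r : ℤ) : ℤ :=
  sInf (cls n A τ r)

lemma cast_bij [NeZero d] : Function.Bijective (fun i : Fin d => ((i : ℕ) : ZMod d)) := by
  constructor
  · intro i j h
    have h' : ((i : ℕ) : ZMod d) = ((j : ℕ) : ZMod d) := h
    have := congrArg ZMod.val h'
    rw [ZMod.val_cast_of_lt i.isLt, ZMod.val_cast_of_lt j.isLt] at this
    exact Fin.ext this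
  · intro τ
    exact ⟨⟨τ.val, ZMod.val_lt τ⟩, ZMod.natCast_rightInverse τ⟩

lemma sum_mfun_range [NeZero d] (hsum : ∑ τ : ZMod d, mfun τ = (m : ℤ)) (a : ZMod d) :
    ∑ j ∈ Finset.range d, mfun (a + (j : ZMod d)) = (m : ℤ) := by
  rw [← Fin.sum_univ_eq_sum_range (fun j => mfun (a + (j : ZMod d))) d]
  rw [Fintype.sum_bijective _ cast_bij (fun i : Fin d => mfun (a + ((i : ℕ) : ZMod d)))
    (fun τ => mfun (a + τ)) (fun i => rfl)]
  exact (Fintype.sum_equiv (Equiv.addLeft a) _ mfun (fun τ => rfl)).trans hsum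

lemma sum_mfun_mul [NeZero d] (hsum : ∑ τ : ZMod d, mfun τ = (m : ℤ)) (a : ZMod d) (t : ℕ) :
    ∑ j ∈ Finset.range (t * d), mfun (a + (j : ZMod d)) = (t : ℤ) * m := by
  induction t with
  | zero => simp
  | succ t ih =>
      have : (t + 1) * d = t * d + d := by ring
      rw [this, Finset.sum_range_add, ih]
      have : ∑ j ∈ Finset.range d, mfun (a + ((t * d + j : ℕ) : ZMod d))
          = ∑ j ∈ Finset.range d, mfun ((a + ((t * d : ℕ) : ZMod d)) + (j : ZMod d)) := by
        apply Finset.sum_congr rfl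
        intro j _
        push_cast
        ring_nf
      rw [this, sum_mfun_range hsum]
      push_cast
      ring

lemma mem_iter (hA : IsChart d n mfun A) {p : ZMod d × ℤ} (hp : p ∈ A) (k : ℕ) :
    ((p.1 + (k : ZMod d), p.2 + ∑ j ∈ Finset.range k, mfun (p.1 + (j : ZMod d))) ∈ A) := by
  induction k with
  | zero => simpa using hp
  | succ k ih =>
      have h := hA.2.2.1 _ ih
      simp only [Finset.sum_range_succ] at *
      have h1 : p.1 + ((k + 1 : ℕ) : ZMod d) = (p.1 + (k : ZMod d)) + 1 := by push_cast; ring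
      rw [h1, ← add_assoc]
      exact h

lemma cls_nonempty [NeZero d] (hn : 0 < n) (hmn : Nat.Coprime m n)
    (hsum : ∑ τ : ZMod d, mfun τ = (m : ℤ)) (hA : IsChart d n mfun A)
    (τ : ZMod d) (r : ℤ) : (cls n A τ r).Nonempty := by
  haveI : NeZero n := ⟨hn.ne'⟩
  obtain ⟨p, hp⟩ := hA.1
  set k0 := (τ - p.1).val with hk0
  have hcopy : p.1 + (k0 : ZMod d) = τ := by
    rw [hk0, ZMod.natCast_rightInverse (τ - p.1)]; ring
  set c := ∑ j ∈ Finset.range k0, mfun (p.1 + (j : ZMod d)) with hc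
  set u := ZMod.unitOfCoprime m hmn with hu
  set t := (((r - p.2 - c : ℤ) : ZMod n) * ((u⁻¹ : (ZMod n)ˣ) : ZMod n)).val with ht
  refine ⟨p.2 + ∑ j ∈ Finset.range (k0 + t * d), mfun (p.1 + (j : ZMod d)), ?_, ?_⟩
  · have h := mem_iter hA hp (k0 + t * d)
    have hcopy2 : p.1 + ((k0 + t * d : ℕ) : ZMod d) = τ := by
      push_cast
      rw [ZMod.natCast_self]
      rw [← hcopy]; push_cast; ring
    rwa [hcopy2] at h
  · rw [Finset.sum_range_add, ← hc]
    have hsecond : ∑ j ∈ Finset.range (t * d), mfun (p.1 + ((k0 + j : ℕ) : ZMod d))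
        = (t : ℤ) * m := by
      rw [← sum_mfun_mul hsum (p.1 + (k0 : ZMod d)) t]
      apply Finset.sum_congr rfl
      intro j _
      push_cast
      ring_nf
    rw [hsecond]
    rw [← ZMod.intCast_zmod_eq_zero_iff_dvd]
    have htcast : ((t : ℕ) : ZMod n) = ((r - p.2 - c : ℤ) : ZMod n) * ((u⁻¹ : (ZMod n)ˣ) : ZMod n) := by
      rw [ht, ZMod.natCast_rightInverse]
    have hmu : ((m : ℕ) : ZMod n) = (u : ZMod n) := (ZMod.coe_unitOfCoprime m hmn).symm
    have huu : ((u⁻¹ : (ZMod n)ˣ) : ZMod n) * (u : ZMod n) = 1 := by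
      rw [← Units.val_mul, inv_mul_cancel]; rfl
    have h1 : ((t : ℕ) : ZMod n) * ((m : ℕ) : ZMod n)
        = ((r : ℤ) : ZMod n) - ((p.2 : ℤ) : ZMod n) - ((c : ℤ) : ZMod n) := by
      rw [htcast, hmu]
      push_cast
      linear_combination (((r : ℤ) : ZMod n) - ((p.2 : ℤ) : ZMod n) - ((c : ℤ) : ZMod n)) * huu
    push_cast
    push_cast at h1
    linear_combination h1

lemma cls_bddBelow (hA : IsChart d n mfun A) (τ : ZMod d) (r : ℤ) :
    ∃ b : ℤ, ∀ y ∈ cls n A τ r, b ≤ y := by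
  obtain ⟨cb, hcb⟩ := hA.2.1
  exact ⟨cb, fun y hy => hcb _ hy.1⟩

lemma bmin_isLeast [NeZero d] (hn : 0 < n) (hmn : Nat.Coprime m n)
    (hsum : ∑ τ : ZMod d, mfun τ = (m : ℤ)) (hA : IsChart d n mfun A)
    (τ : ZMod d) (r : ℤ) : IsLeast (cls n A τ r) (bmin n A τ r) := by
  obtain ⟨b, hb⟩ := cls_bddBelow hA τ r
  obtain ⟨w, hw⟩ := cls_nonempty hn hmn hsum hA τ r
  obtain ⟨lb, hlb, hmin⟩ := Int.exists_least_of_bdd (P := fun y => y ∈ cls n A τ r) ⟨b, hb⟩ ⟨w, hw⟩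
  have hL : IsLeast (cls n A τ r) lb := ⟨hlb, hmin⟩
  rwa [bmin, hL.csInf_eq]


lemma mem_add_mul_n (hA : IsChart d n mfun A) {τ : ZMod d} {y : ℤ} (h : (τ, y) ∈ A) (k : ℕ) :
    (τ, y + (k : ℤ) * (n : ℤ)) ∈ A := by
  induction k with
  | zero => simpa using h
  | succ k ih =>
      have := hA.2.2.2 _ ih
      have he : y + ((k:ℤ)+1) * (n:ℤ) = (y + (k:ℤ)*(n:ℤ)) + (n:ℤ) := by ring
      push_cast
      rw [he]
      exact this

lemma mem_cls_iff (hn : 0 < n) (hA : IsChart d n mfun A) {τ : ZMod d} {r b : ℤ}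
    (hL : IsLeast (cls n A τ r) b) (y : ℤ) :
    y ∈ cls n A τ r ↔ ((n : ℤ) ∣ (y - b) ∧ b ≤ y) := by
  constructor
  · intro hy
    refine ⟨?_, hL.2 hy⟩
    obtain ⟨c1, hc1⟩ := hy.2
    obtain ⟨c2, hc2⟩ := hL.1.2
    exact ⟨c1 - c2, by linarith [hc1, hc2, mul_sub (n:ℤ) c1 c2]⟩
  · rintro ⟨⟨c, hc⟩, hby⟩
    have hc0 : 0 ≤ c := by
      by_contra hneg
      push_neg at hneg
      have hn0 : (0:ℤ) < n := by exact_mod_cast hn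
      nlinarith
    have hy : y = b + (c.toNat : ℤ) * (n : ℤ) := by
      rw [Int.toNat_of_nonneg hc0]; linarith
    constructor
    · rw [hy]
      exact mem_add_mul_n hA hL.1.1 c.toNat
    · obtain ⟨c2, hc2⟩ := hL.1.2
      exact ⟨c + c2, by linarith [mul_add (n:ℤ) c c2]⟩

lemma bmin_mem_Bset (hn : 0 < n) (hA : IsChart d n mfun A) {τ : ZMod d} {r b : ℤ}
    (hL : IsLeast (cls n A τ r) b) : (τ, b) ∈ Bset d n A := by
  refine ⟨hL.1.1, fun hmem => ?_⟩
  have : b - (n:ℤ) ∈ cls n A τ r := by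
    refine ⟨hmem, ?_⟩
    obtain ⟨c2, hc2⟩ := hL.1.2
    exact ⟨c2 - 1, by linarith [mul_sub (n:ℤ) c2 1]⟩
  have := hL.2 this
  have hn' : (0:ℤ) < n := by exact_mod_cast hn
  linarith

lemma Bset_eq_bmin (hn : 0 < n) (hA : IsChart d n mfun A) {τ : ZMod d} {r b y : ℤ}
    (hL : IsLeast (cls n A τ r) b) (hy : (τ, y) ∈ Bset d n A) (hdvd : (n : ℤ) ∣ (y - r)) :
    y = b := by
  have hycls : y ∈ cls n A τ r := ⟨hy.1, hdvd⟩
  have hby := hL.2 hycls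
  rcases eq_or_lt_of_le hby with h | h
  · exact h.symm
  · exfalso
    obtain ⟨hd, hby'⟩ := (mem_cls_iff hn hA hL y).1 hycls
    obtain ⟨c, hc⟩ := hd
    have hn' : (0:ℤ) < n := by exact_mod_cast hn
    have hc1 : 1 ≤ c := by nlinarith
    have : y - (n:ℤ) ∈ cls n A τ r := by
      refine (mem_cls_iff hn hA hL _).2 ⟨⟨c - 1, by linarith [mul_sub (n:ℤ) 1 c]⟩, by nlinarith⟩
    exact hy.2 this.1

lemma bseq_fst : ∀ k : ℕ, (bseq d n mfun A k).1 = ((k : ℕ) : ZMod d)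
  | 0 => by simp [bseq]
  | k + 1 => by
      rw [bseq, bseq_fst k]
      push_cast
      ring

lemma Bset_mem_A {p : ZMod d × ℤ} (hp : p ∈ Bset d n A) : p ∈ A := hp.1

lemma emod_zero_iff_dvd (a : ℤ) : a % (n : ℤ) = 0 ↔ (n : ℤ) ∣ a := by
  constructor
  · exact fun h => Int.dvd_of_emod_eq_zero h
  · exact fun h => Int.emod_eq_zero_of_dvd h

lemma bseq_zero_isLeast [NeZero d] (hn : 0 < n) (hmn : Nat.Coprime m n)
    (hsum : ∑ τ : ZMod d, mfun τ = (m : ℤ)) (hA : IsChart d n mfun A) :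
    IsLeast {x : ℤ | ((0 : ZMod d), x) ∈ Bset d n A} ((bseq d n mfun A 0).2) := by
  have hL := bmin_isLeast hn hmn hsum hA (0 : ZMod d) 0
  have hne : (bmin n A (0 : ZMod d) 0) ∈ {x : ℤ | ((0 : ZMod d), x) ∈ Bset d n A} :=
    bmin_mem_Bset hn hA hL
  obtain ⟨cb, hcb⟩ := hA.2.1
  have hbdd : ∀ y ∈ {x : ℤ | ((0 : ZMod d), x) ∈ Bset d n A}, cb ≤ y :=
    fun y hy => hcb _ hy.1
  obtain ⟨lb, hlb, hmin⟩ := Int.exists_least_of_bdd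
    (P := fun y => y ∈ {x : ℤ | ((0 : ZMod d), x) ∈ Bset d n A}) ⟨cb, hbdd⟩ ⟨_, hne⟩
  have hLL : IsLeast {x : ℤ | ((0 : ZMod d), x) ∈ Bset d n A} lb := ⟨hlb, hmin⟩
  have : (bseq d n mfun A 0).2 = lb := by
    show sInf {x : ℤ | ((0 : ZMod d), x) ∈ Bset d n A} = lb
    exact hLL.csInf_eq
  rwa [this]

/-- Main structural lemma on the sequence `bseq`. -/
lemma bseq_spec [NeZero d] (hn : 0 < n) (hmn : Nat.Coprime m n)
    (hsum : ∑ τ : ZMod d, mfun τ = (m : ℤ)) (hA : IsChart d n mfun A) :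
    ∀ k : ℕ, ((k : ZMod d), (bseq d n mfun A k).2) ∈ Bset d n A ∧
      (bseq d n mfun A (k+1)).2
        = bmin n A (((k+1 : ℕ)) : ZMod d) ((bseq d n mfun A k).2 + mfun ((k : ℕ) : ZMod d)) := by
  have key : ∀ k : ℕ, ((k : ZMod d), (bseq d n mfun A k).2) ∈ Bset d n A →
      (bseq d n mfun A (k+1)).2
        = bmin n A (((k+1 : ℕ)) : ZMod d) ((bseq d n mfun A k).2 + mfun ((k : ℕ) : ZMod d)) := by
    intro k hk
    set r := (bseq d n mfun A k).2 + mfun ((k : ℕ) : ZMod d) with hr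
    have hL := bmin_isLeast hn hmn hsum hA (((k+1 : ℕ)) : ZMod d) r
    set b := bmin n A (((k+1 : ℕ)) : ZMod d) r with hb
    have hrA : ((((k+1 : ℕ)) : ZMod d), r) ∈ A := by
      have := hA.2.2.1 _ (Bset_mem_A hk)
      push_cast
      push_cast at this
      exact this
    have hble : b ≤ r := hL.2 ⟨hrA, ⟨0, by ring⟩⟩
    have hset : {y : ℤ | ((bseq d n mfun A k).1 + 1, y) ∈ Bset d n A ∧
        ((bseq d n mfun A k).2 + mfun (bseq d n mfun A k).1 - y) % (n : ℤ) = 0 ∧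
        y ≤ (bseq d n mfun A k).2 + mfun (bseq d n mfun A k).1} = {b} := by
      have hfst : (bseq d n mfun A k).1 + 1 = (((k+1 : ℕ)) : ZMod d) := by
        rw [bseq_fst]; push_cast; ring
      ext y
      simp only [Set.mem_setOf_eq, Set.mem_singleton_iff, bseq_fst]
      rw [show ((k:ℕ) : ZMod d) + 1 = (((k+1:ℕ)) : ZMod d) by push_cast; ring]
      constructor
      · rintro ⟨hyB, hymod, hyle⟩
        rw [emod_zero_iff_dvd] at hymod
        exact Bset_eq_bmin hn hA hL hyB (by
          obtain ⟨c, hc⟩ := hymod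
          exact ⟨-c, by rw [hr]; linarith [hc]⟩)
      · rintro rfl
        refine ⟨bmin_mem_Bset hn hA hL, ?_, hble⟩
        rw [emod_zero_iff_dvd]
        obtain ⟨c, hc⟩ := hL.1.2
        exact ⟨-c, by linarith⟩
    show sInf _ = b
    rw [hset, csInf_singleton]
  intro k
  induction k with
  | zero =>
      have h0 : ((0 : ZMod d), (bseq d n mfun A 0).2) ∈ Bset d n A := by
        have := (bseq_zero_isLeast hn hmn hsum hA).1
        simpa using this
      have h0' : (((0:ℕ) : ZMod d), (bseq d n mfun A 0).2) ∈ Bset d n A := by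
        push_cast; exact h0
      exact ⟨h0', key 0 h0'⟩
  | succ k ih =>
      have hmem : (((k+1 : ℕ) : ZMod d), (bseq d n mfun A (k+1)).2) ∈ Bset d n A := by
        rw [ih.2]
        exact bmin_mem_Bset hn hA (bmin_isLeast hn hmn hsum hA _ _)
      exact ⟨hmem, key (k+1) hmem⟩

section TypeProps

variable [NeZero d] (hn : 0 < n) (hmn : Nat.Coprime m n)
  (hsum : ∑ τ : ZMod d, mfun τ = (m : ℤ)) (hA : IsChart d n mfun A)

include hn hmn hsum hA

lemma x_succ_le (k : ℕ) :
    (bseq d n mfun A (k+1)).2 ≤ (bseq d n mfun A k).2 + mfun ((k : ℕ) : ZMod d) := by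
  obtain ⟨hB, heq⟩ := bseq_spec hn hmn hsum hA k
  rw [heq]
  have hL := bmin_isLeast hn hmn hsum hA (((k+1 : ℕ)) : ZMod d)
    ((bseq d n mfun A k).2 + mfun ((k : ℕ) : ZMod d))
  refine hL.2 ⟨?_, ⟨0, by ring⟩⟩
  have := hA.2.2.1 _ (Bset_mem_A hB)
  push_cast at this ⊢
  exact this

lemma x_succ_dvd (k : ℕ) :
    (n : ℤ) ∣ ((bseq d n mfun A k).2 + mfun ((k : ℕ) : ZMod d) - (bseq d n mfun A (k+1)).2) := by
  obtain ⟨hB, heq⟩ := bseq_spec hn hmn hsum hA k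
  rw [heq]
  have hL := bmin_isLeast hn hmn hsum hA (((k+1 : ℕ)) : ZMod d)
    ((bseq d n mfun A k).2 + mfun ((k : ℕ) : ZMod d))
  obtain ⟨c, hc⟩ := hL.1.2
  exact ⟨-c, by linarith⟩

omit hn hmn hsum hA in
lemma typeInt_succ_eq (k : ℕ) : typeInt d n mfun A (k+1)
    = ((bseq d n mfun A k).2 + mfun ((k : ℕ) : ZMod d) - (bseq d n mfun A (k+1)).2) / (n : ℤ) := by
  have h : k + 1 - 1 = k := rfl
  rw [typeInt, h, bseq_fst]

lemma typeInt_succ_nonneg (k : ℕ) : 0 ≤ typeInt d n mfun A (k+1) := by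
  rw [typeInt_succ_eq]
  exact Int.ediv_nonneg (by linarith [x_succ_le hn hmn hsum hA k]) (Int.ofNat_nonneg n)

lemma x_succ_eq (k : ℕ) : (bseq d n mfun A (k+1)).2
    = (bseq d n mfun A k).2 + mfun ((k : ℕ) : ZMod d) - (n : ℤ) * typeInt d n mfun A (k+1) := by
  rw [typeInt_succ_eq]
  rw [Int.mul_ediv_cancel' (x_succ_dvd hn hmn hsum hA k)]
  ring

lemma x_formula (k : ℕ) : (bseq d n mfun A k).2
    = (bseq d n mfun A 0).2 + (∑ j ∈ Finset.range k, mfun ((j : ℕ) : ZMod d))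
      - (n : ℤ) * ∑ j ∈ Finset.range k, typeInt d n mfun A (j+1) := by
  induction k with
  | zero => simp
  | succ k ih =>
      rw [Finset.sum_range_succ, Finset.sum_range_succ, x_succ_eq hn hmn hsum hA k, ih]
      ring

lemma x_mul_d (k : ℕ) : (bseq d n mfun A (k*d)).2
    = (bseq d n mfun A 0).2 + (k : ℤ) * m
      - (n : ℤ) * ∑ j ∈ Finset.range (k*d), typeInt d n mfun A (j+1) := by
  rw [x_formula hn hmn hsum hA (k*d)]
  have : ∑ j ∈ Finset.range (k*d), mfun ((j : ℕ) : ZMod d) = (k : ℤ) * m := by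
    rw [← sum_mfun_mul hsum (0 : ZMod d) k]
    exact Finset.sum_congr rfl (fun j _ => by rw [zero_add])
  rw [this]

lemma x0_le_x_mul_d (k : ℕ) : (bseq d n mfun A 0).2 ≤ (bseq d n mfun A (k*d)).2 := by
  have hB := (bseq_spec hn hmn hsum hA (k*d)).1
  have hc : ((k*d : ℕ) : ZMod d) = 0 := by
    push_cast
    rw [ZMod.natCast_self]
    ring
  rw [hc] at hB
  exact (bseq_zero_isLeast hn hmn hsum hA).2 hB

lemma sum_typeInt_le (k : ℕ) :
    (n : ℤ) * ∑ j ∈ Finset.range (k*d), typeInt d n mfun A (j+1) ≤ (k : ℤ) * m := by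
  have h1 := x_mul_d hn hmn hsum hA k
  have h2 := x0_le_x_mul_d hn hmn hsum hA k
  linarith

lemma sum_typeInt_eq : ∑ j ∈ Finset.range (n*d), typeInt d n mfun A (j+1) = (m : ℤ) := by
  have h1 := x_mul_d hn hmn hsum hA n
  have hB := (bseq_spec hn hmn hsum hA (n*d)).1
  have hc : ((n*d : ℕ) : ZMod d) = 0 := by
    push_cast; rw [ZMod.natCast_self]; ring
  rw [hc] at hB
  have hB0 : ((0 : ZMod d), (bseq d n mfun A 0).2) ∈ Bset d n A := by
    have := (bseq_zero_isLeast hn hmn hsum hA).1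
    exact this
  have hL := bmin_isLeast hn hmn hsum hA (0 : ZMod d) ((bseq d n mfun A 0).2)
  have e1 : (bseq d n mfun A 0).2 = bmin n A (0 : ZMod d) ((bseq d n mfun A 0).2) :=
    Bset_eq_bmin hn hA hL hB0 ⟨0, by ring⟩
  have e2 : (bseq d n mfun A (n*d)).2 = bmin n A (0 : ZMod d) ((bseq d n mfun A 0).2) := by
    refine Bset_eq_bmin hn hA hL hB ?_
    have : (bseq d n mfun A (n*d)).2 - (bseq d n mfun A 0).2
        = (n : ℤ) * ((m : ℤ) - ∑ j ∈ Finset.range (n*d), typeInt d n mfun A (j+1)) := by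
      rw [h1]; ring
    exact ⟨_, this⟩
  have hx : (bseq d n mfun A (n*d)).2 = (bseq d n mfun A 0).2 := by rw [e1, e2]
  have hn' : (n : ℤ) ≠ 0 := by exact_mod_cast hn.ne'
  rw [hx] at h1
  have hz : (n : ℤ) * ((m : ℤ) - ∑ j ∈ Finset.range (n*d), typeInt d n mfun A (j+1)) = 0 := by
    linarith
  rcases mul_eq_zero.1 hz with h | h
  · exact absurd h hn'
  · linarith

end TypeProps

lemma filter_eq_range {k : ℕ} (hk : k ≤ n) :
    Finset.filter (fun i => i + 1 ≤ k) (Finset.range n) = Finset.range k := by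
  ext i
  simp only [Finset.mem_filter, Finset.mem_range]
  omega

lemma sum_range_mul_d (F : ℕ → ℤ) (k : ℕ) :
    ∑ j ∈ Finset.range (k*d), F j = ∑ i ∈ Finset.range k, ∑ τ ∈ Finset.range d, F (i*d + τ) := by
  induction k with
  | zero => simp
  | succ k ih =>
      have h : (k+1) * d = k*d + d := by ring
      rw [h, Finset.sum_range_add, ih, Finset.sum_range_succ]

lemma sum_reindex (T : ℕ → ℤ) {k : ℕ} (hk : k ≤ n) :
    ∑ τ : Fin d, ∑ i : Fin n, (if (i : ℕ) + 1 ≤ k then T ((τ : ℕ) + 1 + (i : ℕ) * d) else 0)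
      = ∑ j ∈ Finset.range (k*d), T (j+1) := by
  have lhs : ∑ τ : Fin d, ∑ i : Fin n, (if (i : ℕ) + 1 ≤ k then T ((τ : ℕ) + 1 + (i : ℕ) * d) else 0)
      = ∑ τ ∈ Finset.range d, ∑ i ∈ Finset.range n, (if i + 1 ≤ k then T (τ + 1 + i * d) else 0) := by
    rw [← Fin.sum_univ_eq_sum_range (fun τ => ∑ i ∈ Finset.range n,
      (if i + 1 ≤ k then T (τ + 1 + i * d) else 0)) d]
    apply Finset.sum_congr rfl
    intro τ _
    rw [← Fin.sum_univ_eq_sum_range (fun i => if i + 1 ≤ k then T ((τ:ℕ) + 1 + i * d) else 0) n]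
  rw [lhs, Finset.sum_comm]
  have step : ∀ i ∈ Finset.range n, ∑ τ ∈ Finset.range d, (if i + 1 ≤ k then T (τ + 1 + i * d) else 0)
      = (if i + 1 ≤ k then ∑ τ ∈ Finset.range d, T (τ + 1 + i * d) else 0) := by
    intro i _
    split <;> simp
  rw [Finset.sum_congr rfl step, ← Finset.sum_filter, filter_eq_range hk,
    sum_range_mul_d (fun j => T (j+1)) k]
  apply Finset.sum_congr rfl
  intro i _
  apply Finset.sum_congr rfl
  intro τ _
  congr 1
  ring

lemma typeTup_memP [NeZero d] (hn : 0 < n) (hmn : Nat.Coprime m n)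
    (hsum : ∑ τ : ZMod d, mfun τ = (m : ℤ)) (hA : IsChart d n mfun A) :
    memP d n m (typeTup d n mfun A) := by
  refine ⟨?_, ?_, ?_⟩
  · intro τ i
    show 0 ≤ typeInt d n mfun A ((τ : ℕ) + 1 + (i : ℕ) * d)
    rw [show (τ : ℕ) + 1 + (i : ℕ) * d = ((τ : ℕ) + (i : ℕ) * d) + 1 by ring]
    exact typeInt_succ_nonneg hn hmn hsum hA _
  · intro k hk1 hkn
    rw [show (∑ τ : Fin d, ∑ i : Fin n,
        (if (i : ℕ) + 1 ≤ k then typeTup d n mfun A τ i else 0))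
      = ∑ τ : Fin d, ∑ i : Fin n,
        (if (i : ℕ) + 1 ≤ k then typeInt d n mfun A ((τ : ℕ) + 1 + (i : ℕ) * d) else 0) from rfl]
    rw [sum_reindex (typeInt d n mfun A) hkn]
    exact sum_typeInt_le hn hmn hsum hA k
  · have : ∑ τ : Fin d, ∑ i : Fin n, typeTup d n mfun A τ i
        = ∑ τ : Fin d, ∑ i : Fin n,
          (if (i : ℕ) + 1 ≤ n then typeInt d n mfun A ((τ : ℕ) + 1 + (i : ℕ) * d) else 0) := by
      apply Finset.sum_congr rfl; intro τ _
      apply Finset.sum_congr rfl; intro i _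
      rw [if_pos (Nat.succ_le_of_lt i.isLt)]; rfl
    rw [this, sum_reindex (typeInt d n mfun A) (le_refl n)]
    exact sum_typeInt_eq hn hmn hsum hA

lemma mem_shift {z : ℤ} {p : ZMod d × ℤ} : p ∈ shift d A z ↔ (p.1, p.2 - z) ∈ A := by
  constructor
  · rintro ⟨q, hq, rfl⟩
    simpa using hq
  · intro h
    exact ⟨(p.1, p.2 - z), h, by simp⟩

lemma Bset_shift {z : ℤ} {τ : ZMod d} {y : ℤ} :
    (τ, y) ∈ Bset d n (shift d A z) ↔ (τ, y - z) ∈ Bset d n A := by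
  unfold Bset
  simp only [Set.mem_setOf_eq, mem_shift]
  constructor
  · rintro ⟨h1, h2⟩
    exact ⟨h1, by rwa [show y - (n:ℤ) - z = y - z - (n:ℤ) by ring] at h2⟩
  · rintro ⟨h1, h2⟩
    exact ⟨h1, by rwa [show y - (n:ℤ) - z = y - z - (n:ℤ) by ring]⟩

lemma isLeast_cls_shift {z : ℤ} {τ : ZMod d} {r b : ℤ}
    (hL : IsLeast (cls n A τ (r - z)) b) : IsLeast (cls n (shift d A z) τ r) (b + z) := by
  constructor
  · refine ⟨mem_shift.2 (by simpa using hL.1.1), ?_⟩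
    obtain ⟨c, hc⟩ := hL.1.2
    exact ⟨c, by linarith⟩
  · rintro y ⟨hy, c, hc⟩
    have : y - z ∈ cls n A τ (r - z) := ⟨mem_shift.1 hy, ⟨c, by linarith⟩⟩
    linarith [hL.2 this]

lemma shift_x_eq [NeZero d] (hn : 0 < n) (hmn : Nat.Coprime m n)
    (hsum : ∑ τ : ZMod d, mfun τ = (m : ℤ)) (hA : IsChart d n mfun A)
    {A' : Set (ZMod d × ℤ)} (hA' : IsChart d n mfun A') {z : ℤ} (hz : shift d A z = A') :
    ∀ k : ℕ, (bseq d n mfun A' k).2 = (bseq d n mfun A k).2 + z := by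
  intro k
  induction k with
  | zero =>
      have h1 := bseq_zero_isLeast hn hmn hsum hA
      have h2 := bseq_zero_isLeast hn hmn hsum hA'
      have h3 : IsLeast {x : ℤ | ((0 : ZMod d), x) ∈ Bset d n A'} ((bseq d n mfun A 0).2 + z) := by
        subst hz
        constructor
        · exact Bset_shift.2 (by simpa using h1.1)
        · intro y hy
          have := h1.2 (Bset_shift.1 hy)
          linarith
      exact h2.unique h3
  | succ k ih =>
      have e1 := (bseq_spec hn hmn hsum hA k).2
      have e2 := (bseq_spec hn hmn hsum hA' k).2
      have hL := bmin_isLeast hn hmn hsum hA (((k+1 : ℕ)) : ZMod d)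
        ((bseq d n mfun A k).2 + mfun ((k : ℕ) : ZMod d))
      have hL' := bmin_isLeast hn hmn hsum hA' (((k+1 : ℕ)) : ZMod d)
        ((bseq d n mfun A' k).2 + mfun ((k : ℕ) : ZMod d))
      have hshift : IsLeast (cls n A' (((k+1 : ℕ)) : ZMod d)
          ((bseq d n mfun A' k).2 + mfun ((k : ℕ) : ZMod d)))
          (bmin n A (((k+1 : ℕ)) : ZMod d) ((bseq d n mfun A k).2 + mfun ((k : ℕ) : ZMod d)) + z) := by
        subst hz
        apply isLeast_cls_shift
        rw [ih]
        rw [show (bseq d n mfun A k).2 + z + mfun ((k : ℕ) : ZMod d) - z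
          = (bseq d n mfun A k).2 + mfun ((k : ℕ) : ZMod d) by ring]
        exact hL
      rw [e1, e2, hL'.unique hshift]

lemma typeTup_shift_eq [NeZero d] (hn : 0 < n) (hmn : Nat.Coprime m n)
    (hsum : ∑ τ : ZMod d, mfun τ = (m : ℤ)) (hA : IsChart d n mfun A)
    {A' : Set (ZMod d × ℤ)} (hA' : IsChart d n mfun A') (h : ChartEquiv d A A') :
    typeTup d n mfun A = typeTup d n mfun A' := by
  obtain ⟨z, hz⟩ := h
  funext τ i
  show typeInt d n mfun A _ = typeInt d n mfun A' _
  rw [show (τ : ℕ) + 1 + (i : ℕ) * d = ((τ : ℕ) + (i : ℕ) * d) + 1 by ring]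
  rw [typeInt_succ_eq, typeInt_succ_eq]
  rw [shift_x_eq hn hmn hsum hA hA' hz, shift_x_eq hn hmn hsum hA hA' hz]
  ring_nf

/-! Generic lemmas about sequences satisfying the recursion mod `n`. -/

lemma seq_residue [NeZero d] (x : ℕ → ℤ)
    (hrec : ∀ j : ℕ, (n : ℤ) ∣ (x j + mfun ((j : ℕ) : ZMod d) - x (j+1))) (a b : ℕ) :
    (n : ℤ) ∣ (x (a + b) - x a - ∑ j ∈ Finset.range b, mfun (((a + j : ℕ)) : ZMod d)) := by
  induction b with
  | zero => simp
  | succ b ih =>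
      have h := hrec (a + b)
      rw [Finset.sum_range_succ, show a + (b+1) = (a+b)+1 by ring]
      obtain ⟨c1, hc1⟩ := ih
      obtain ⟨c2, hc2⟩ := h
      exact ⟨c1 - c2, by push_cast at *; linarith⟩

lemma seq_residue_d [NeZero d] (hsum : ∑ τ : ZMod d, mfun τ = (m : ℤ)) (x : ℕ → ℤ)
    (hrec : ∀ j : ℕ, (n : ℤ) ∣ (x j + mfun ((j : ℕ) : ZMod d) - x (j+1))) (a i : ℕ) :
    (n : ℤ) ∣ (x (a + i*d) - x a - (i : ℤ) * m) := by
  have h := seq_residue x hrec a (i*d)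
  have hs : ∑ j ∈ Finset.range (i*d), mfun (((a + j : ℕ)) : ZMod d) = (i : ℤ) * m := by
    rw [← sum_mfun_mul hsum ((a : ℕ) : ZMod d) i]
    exact Finset.sum_congr rfl (fun j _ => by push_cast; ring_nf)
  rwa [hs] at h

lemma seq_inj [NeZero d] (hn : 0 < n) (hmn : Nat.Coprime m n)
    (hsum : ∑ τ : ZMod d, mfun τ = (m : ℤ)) (x : ℕ → ℤ)
    (hrec : ∀ j : ℕ, (n : ℤ) ∣ (x j + mfun ((j : ℕ) : ZMod d) - x (j+1)))
    {τ i i' : ℕ} (hi : i < n) (hi' : i' < n)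
    (hdvd : (n : ℤ) ∣ (x (τ + i*d) - x (τ + i'*d))) : i = i' := by
  have h1 := seq_residue_d hsum x hrec τ i
  have h2 := seq_residue_d hsum x hrec τ i'
  have h3 : (n : ℤ) ∣ ((i : ℤ) - (i' : ℤ)) * m := by
    obtain ⟨c1, hc1⟩ := h1
    obtain ⟨c2, hc2⟩ := h2
    obtain ⟨c3, hc3⟩ := hdvd
    exact ⟨c3 - c1 + c2, by push_cast at *; linarith⟩
  have hcop : IsCoprime ((n : ℕ) : ℤ) ((m : ℕ) : ℤ) := Nat.isCoprime_iff_coprime.2 hmn.symm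
  have h4 : (n : ℤ) ∣ ((i : ℤ) - (i' : ℤ)) := hcop.dvd_of_dvd_mul_right h3
  obtain ⟨c, hc⟩ := h4
  have hn' : (0:ℤ) < n := by exact_mod_cast hn
  have hi2 : (i : ℤ) < n := by exact_mod_cast hi
  have hi2' : (i' : ℤ) < n := by exact_mod_cast hi'
  have hiz : (0:ℤ) ≤ i := Int.ofNat_nonneg i
  have hiz' : (0:ℤ) ≤ i' := Int.ofNat_nonneg i'
  have hc0 : c = 0 := by
    rcases lt_trichotomy c 0 with h | h | h
    · nlinarith
    · exact h
    · nlinarith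
  have : (i : ℤ) = (i' : ℤ) := by rw [hc0] at hc; linarith
  exact_mod_cast this

lemma seq_cover [NeZero d] (hn : 0 < n) (hmn : Nat.Coprime m n)
    (hsum : ∑ τ : ZMod d, mfun τ = (m : ℤ)) (x : ℕ → ℤ)
    (hrec : ∀ j : ℕ, (n : ℤ) ∣ (x j + mfun ((j : ℕ) : ZMod d) - x (j+1)))
    (τ : ZMod d) (r : ℤ) :
    ∃ j : ℕ, j < d*n ∧ ((j : ℕ) : ZMod d) = τ ∧ (n : ℤ) ∣ (r - x j) := by
  haveI : NeZero n := ⟨hn.ne'⟩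
  set a := τ.val with ha
  set u := ZMod.unitOfCoprime m hmn with hu
  set i := (((r - x a : ℤ) : ZMod n) * ((u⁻¹ : (ZMod n)ˣ) : ZMod n)).val with hi
  have hid : i < n := ZMod.val_lt _
  have had : a < d := ZMod.val_lt τ
  refine ⟨a + i*d, ?_, ?_, ?_⟩
  · have h1 : i*d ≤ (n-1)*d := Nat.mul_le_mul_right d (by omega)
    have h2 : a + (n-1)*d < d + (n-1)*d := by omega
    have h3 : d + (n-1)*d = d*n := by
      have : d + (n-1)*d = ((n-1)+1)*d := by ring
      rw [this, Nat.sub_add_cancel hn]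
      ring
    omega
  · push_cast
    rw [ZMod.natCast_self, ha, ZMod.natCast_rightInverse τ]
    ring
  · have hres := seq_residue_d hsum x hrec a i
    have key : (n : ℤ) ∣ (r - x a - (i : ℤ) * m) := by
      rw [← ZMod.intCast_zmod_eq_zero_iff_dvd]
      have hicast : ((i : ℕ) : ZMod n) = ((r - x a : ℤ) : ZMod n) * ((u⁻¹ : (ZMod n)ˣ) : ZMod n) := by
        rw [hi, ZMod.natCast_rightInverse]
      have hmu : ((m : ℕ) : ZMod n) = (u : ZMod n) := (ZMod.coe_unitOfCoprime m hmn).symm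
      have huu : ((u⁻¹ : (ZMod n)ˣ) : ZMod n) * (u : ZMod n) = 1 := by
        rw [← Units.val_mul, inv_mul_cancel]; rfl
      have h1 : ((i : ℕ) : ZMod n) * ((m : ℕ) : ZMod n)
          = ((r : ℤ) : ZMod n) - ((x a : ℤ) : ZMod n) := by
        rw [hicast, hmu]
        push_cast
        linear_combination (((r : ℤ) : ZMod n) - ((x a : ℤ) : ZMod n)) * huu
      push_cast
      push_cast at h1
      linear_combination -h1
    obtain ⟨c1, hc1⟩ := key
    obtain ⟨c2, hc2⟩ := hres
    exact ⟨c1 - c2, by push_cast at *; linarith⟩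

/-- Normal form of a chart in terms of its `bseq` values. -/
lemma chart_form [NeZero d] (hn : 0 < n) (hmn : Nat.Coprime m n)
    (hsum : ∑ τ : ZMod d, mfun τ = (m : ℤ)) (hA : IsChart d n mfun A) :
    A = {p : ZMod d × ℤ | ∃ j : ℕ, j < d*n ∧ ((j : ℕ) : ZMod d) = p.1 ∧
      (n : ℤ) ∣ (p.2 - (bseq d n mfun A j).2) ∧ (bseq d n mfun A j).2 ≤ p.2} := by
  have hrec : ∀ j : ℕ, (n : ℤ) ∣ ((bseq d n mfun A j).2 + mfun ((j : ℕ) : ZMod d)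
      - (bseq d n mfun A (j+1)).2) := fun j => x_succ_dvd hn hmn hsum hA j
  ext p
  obtain ⟨τ, y⟩ := p
  simp only [Set.mem_setOf_eq]
  constructor
  · intro hy
    obtain ⟨j, hj, hcopy, hdvd⟩ := seq_cover hn hmn hsum (fun k => (bseq d n mfun A k).2) hrec τ y
    refine ⟨j, hj, hcopy, hdvd, ?_⟩
    · have hB := (bseq_spec hn hmn hsum hA j).1
      rw [hcopy] at hB
      have hL := bmin_isLeast hn hmn hsum hA τ ((bseq d n mfun A j).2)
      have hb : (bseq d n mfun A j).2 = bmin n A τ ((bseq d n mfun A j).2) :=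
        Bset_eq_bmin hn hA hL hB ⟨0, by ring⟩
      have hycls : y ∈ cls n A τ ((bseq d n mfun A j).2) := ⟨hy, hdvd⟩
      have := hL.2 hycls
      linarith [hb ▸ this]
  · rintro ⟨j, hj, hcopy, hdvd, hle⟩
    have hB := (bseq_spec hn hmn hsum hA j).1
    rw [hcopy] at hB
    have hL := bmin_isLeast hn hmn hsum hA τ ((bseq d n mfun A j).2)
    have hb : (bseq d n mfun A j).2 = bmin n A τ ((bseq d n mfun A j).2) :=
      Bset_eq_bmin hn hA hL hB ⟨0, by ring⟩
    have hLj : IsLeast (cls n A τ ((bseq d n mfun A j).2)) ((bseq d n mfun A j).2) := by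
      rw [hb]; exact hb ▸ hL
    have : y ∈ cls n A τ ((bseq d n mfun A j).2) :=
      (mem_cls_iff hn hA hLj y).2 ⟨hdvd, hle⟩
    exact this.1

lemma chart_form_mem [NeZero d] (hn : 0 < n) (hmn : Nat.Coprime m n)
    (hsum : ∑ τ : ZMod d, mfun τ = (m : ℤ)) (hA : IsChart d n mfun A) (p : ZMod d × ℤ) :
    p ∈ A ↔ ∃ j : ℕ, j < d*n ∧ ((j : ℕ) : ZMod d) = p.1 ∧
      (n : ℤ) ∣ (p.2 - (bseq d n mfun A j).2) ∧ (bseq d n mfun A j).2 ≤ p.2 :=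
  Set.ext_iff.1 (chart_form hn hmn hsum hA) p

lemma typeInt_eq_of_tup [NeZero d] (hd : 0 < d) (hn : 0 < n)
    {A' : Set (ZMod d × ℤ)} (h : typeTup d n mfun A = typeTup d n mfun A')
    {k : ℕ} (hk1 : 1 ≤ k) (hk : k ≤ d*n) :
    typeInt d n mfun A k = typeInt d n mfun A' k := by
  have hτ : (k-1) % d < d := Nat.mod_lt _ hd
  have hkdn : k - 1 < d * n := lt_of_lt_of_le (Nat.sub_lt hk1 one_pos) hk
  have hi : (k-1)/d < n := by
    rw [Nat.div_lt_iff_lt_mul hd]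
    rwa [mul_comm]
  have hidx : (k-1) % d + 1 + ((k-1)/d) * d = k := by
    have e := Nat.mod_add_div (k-1) d
    have e2 : (k-1) % d + 1 + ((k-1)/d) * d = ((k-1) % d + d * ((k-1)/d)) + 1 := by ring
    rw [e2, e]
    omega
  have hth := congrFun (congrFun h ⟨(k-1)%d, hτ⟩) ⟨(k-1)/d, hi⟩
  have hth2 : typeInt d n mfun A ((k-1) % d + 1 + ((k-1)/d) * d)
      = typeInt d n mfun A' ((k-1) % d + 1 + ((k-1)/d) * d) := hth
  rwa [hidx] at hth2

lemma typeTup_inj [NeZero d] (hn : 0 < n) (hmn : Nat.Coprime m n)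
    (hsum : ∑ τ : ZMod d, mfun τ = (m : ℤ)) (hA : IsChart d n mfun A)
    {A' : Set (ZMod d × ℤ)} (hA' : IsChart d n mfun A')
    (h : typeTup d n mfun A = typeTup d n mfun A') : ChartEquiv d A A' := by
  have hd : 0 < d := Nat.pos_of_ne_zero (NeZero.ne d)
  set z := (bseq d n mfun A' 0).2 - (bseq d n mfun A 0).2 with hzdef
  have hx : ∀ j, j < d*n → (bseq d n mfun A' j).2 = (bseq d n mfun A j).2 + z := by
    intro j
    induction j with
    | zero => intro _; rw [hzdef]; ring
    | succ j ih =>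
        intro hj
        have hj' : j < d*n := Nat.lt_of_succ_lt hj
        have e1 := x_succ_eq hn hmn hsum hA j
        have e2 := x_succ_eq hn hmn hsum hA' j
        have ht := typeInt_eq_of_tup hd hn h (k := j+1) (Nat.succ_le_succ (Nat.zero_le j))
          (Nat.le_of_lt hj)
        rw [e1, e2, ih hj', ht]
        ring
  refine ⟨z, ?_⟩
  ext p
  rw [mem_shift, chart_form_mem hn hmn hsum hA (p.1, p.2 - z),
    chart_form_mem hn hmn hsum hA' p]
  constructor
  · rintro ⟨j, hj, hc, hdvd, hle⟩
    refine ⟨j, hj, hc, ?_, ?_⟩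
    · rw [hx j hj]
      obtain ⟨c, hc2⟩ := hdvd
      exact ⟨c, by simp at hc2 ⊢; linarith⟩
    · rw [hx j hj]
      simp at hle
      linarith
  · rintro ⟨j, hj, hc, hdvd, hle⟩
    refine ⟨j, hj, hc, ?_, ?_⟩
    · rw [hx j hj] at hdvd
      obtain ⟨c, hc2⟩ := hdvd
      exact ⟨c, by simp; linarith⟩
    · rw [hx j hj] at hle
      simp
      linarith

/-! Surjectivity: construction of a chart with a given type. -/

def muSeq (d n : ℕ) [NeZero d] [NeZero n] (μ : Fin d → Fin n → ℤ) (j : ℕ) : ℤ :=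
  μ ⟨(j-1) % d, Nat.mod_lt _ (Nat.pos_of_ne_zero (NeZero.ne d))⟩
    ⟨((j-1)/d) % n, Nat.mod_lt _ (Nat.pos_of_ne_zero (NeZero.ne n))⟩

def xSeq (d n : ℕ) [NeZero d] [NeZero n] (mfun : ZMod d → ℤ) (μ : Fin d → Fin n → ℤ) : ℕ → ℤ
  | 0 => 0
  | j+1 => xSeq d n mfun μ j + mfun ((j : ℕ) : ZMod d) - (n : ℤ) * muSeq d n μ (j+1)

def Aset (d n : ℕ) [NeZero d] [NeZero n] (mfun : ZMod d → ℤ) (μ : Fin d → Fin n → ℤ) :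
    Set (ZMod d × ℤ) :=
  {p | ∃ j : ℕ, j < d*n ∧ ((j : ℕ) : ZMod d) = p.1 ∧
    (n : ℤ) ∣ (p.2 - xSeq d n mfun μ j) ∧ xSeq d n mfun μ j ≤ p.2}

section Surj

variable [NeZero d] [NeZero n] {μ : Fin d → Fin n → ℤ}

lemma dpos : 0 < d := Nat.pos_of_ne_zero (NeZero.ne d)
lemma npos : 0 < n := Nat.pos_of_ne_zero (NeZero.ne n)

lemma muSeq_idx (τ i : ℕ) (hτ : τ < d) (hi : i < n) :
    muSeq d n μ (τ + 1 + i*d) = μ ⟨τ, hτ⟩ ⟨i, hi⟩ := by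
  have e : (τ + 1 + i*d) - 1 = τ + i*d := by
    rw [show τ + 1 + i*d = (τ + i*d) + 1 by ring, Nat.succ_sub_one]
  unfold muSeq
  congr 1
  · apply Fin.ext
    show ((τ + 1 + i*d) - 1) % d = τ
    rw [e, Nat.add_mul_mod_self_right, Nat.mod_eq_of_lt hτ]
  · apply Fin.ext
    show (((τ + 1 + i*d) - 1) / d) % n = i
    rw [e, Nat.add_mul_div_right _ _ dpos, Nat.div_eq_of_lt hτ, Nat.zero_add,
      Nat.mod_eq_of_lt hi]

lemma sum_muSeq {k : ℕ} (hk : k ≤ n) :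
    ∑ j ∈ Finset.range (k*d), muSeq d n μ (j+1)
      = ∑ τ : Fin d, ∑ i : Fin n, (if (i : ℕ) + 1 ≤ k then μ τ i else 0) := by
  rw [← sum_reindex (muSeq d n μ) hk]
  apply Finset.sum_congr rfl
  intro τ _
  apply Finset.sum_congr rfl
  intro i _
  split
  · rw [muSeq_idx (τ : ℕ) (i : ℕ) τ.isLt i.isLt]
  · rfl

lemma xSeq_formula (k : ℕ) : xSeq d n mfun μ k
    = (∑ j ∈ Finset.range k, mfun ((j : ℕ) : ZMod d))
      - (n : ℤ) * ∑ j ∈ Finset.range k, muSeq d n μ (j+1) := by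
  induction k with
  | zero => simp [xSeq]
  | succ k ih =>
      rw [Finset.sum_range_succ, Finset.sum_range_succ, xSeq, ih]
      ring

lemma xSeq_kd (hsum : ∑ τ : ZMod d, mfun τ = (m : ℤ)) {k : ℕ} (hk : k ≤ n) :
    xSeq d n mfun μ (k*d) = (k : ℤ) * m
      - (n : ℤ) * ∑ τ : Fin d, ∑ i : Fin n, (if (i : ℕ) + 1 ≤ k then μ τ i else 0) := by
  rw [xSeq_formula, sum_muSeq hk]
  have : ∑ j ∈ Finset.range (k*d), mfun ((j : ℕ) : ZMod d) = (k : ℤ) * m := by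
    rw [← sum_mfun_mul hsum (0 : ZMod d) k]
    exact Finset.sum_congr rfl (fun j _ => by rw [zero_add])
  rw [this]

lemma xSeq_kd_nonneg (hsum : ∑ τ : ZMod d, mfun τ = (m : ℤ)) (hμ : memP d n m μ)
    {k : ℕ} (hk : k ≤ n) : 0 ≤ xSeq d n mfun μ (k*d) := by
  rcases Nat.eq_zero_or_pos k with h | h
  · subst h; simp [xSeq]
  · rw [xSeq_kd hsum hk]
    have := hμ.2.1 k h hk
    linarith

lemma xSeq_dn (hsum : ∑ τ : ZMod d, mfun τ = (m : ℤ)) (hμ : memP d n m μ) :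
    xSeq d n mfun μ (d*n) = 0 := by
  rw [mul_comm, xSeq_kd hsum (le_refl n)]
  have he : ∑ τ : Fin d, ∑ i : Fin n, (if (i : ℕ) + 1 ≤ n then μ τ i else 0)
      = ∑ τ : Fin d, ∑ i : Fin n, μ τ i := by
    apply Finset.sum_congr rfl; intro τ _
    apply Finset.sum_congr rfl; intro i _
    rw [if_pos (Nat.succ_le_of_lt i.isLt)]
  rw [he, hμ.2.2]
  ring

lemma xSeq_rec (j : ℕ) : (n : ℤ) ∣ (xSeq d n mfun μ j + mfun ((j : ℕ) : ZMod d)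
    - xSeq d n mfun μ (j+1)) :=
  ⟨muSeq d n μ (j+1), by rw [xSeq]; ring⟩

lemma muSeq_nonneg (hμ : memP d n m μ) (j : ℕ) : 0 ≤ muSeq d n μ j := hμ.1 _ _

lemma xSeq_succ_le (hμ : memP d n m μ) (j : ℕ) :
    xSeq d n mfun μ (j+1) ≤ xSeq d n mfun μ j + mfun ((j : ℕ) : ZMod d) := by
  have h1 := muSeq_nonneg hμ (j+1)
  have h2 : (0:ℤ) ≤ n := Int.ofNat_nonneg n
  rw [xSeq]
  nlinarith

lemma hrep (hsum : ∑ τ : ZMod d, mfun τ = (m : ℤ)) (hμ : memP d n m μ)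
    {k : ℕ} (hk : k ≤ d*n) : ∃ j0 : ℕ, j0 < d*n ∧ ((j0 : ℕ) : ZMod d) = ((k : ℕ) : ZMod d)
      ∧ xSeq d n mfun μ j0 = xSeq d n mfun μ k := by
  rcases lt_or_eq_of_le hk with h | h
  · exact ⟨k, h, rfl, rfl⟩
  · subst h
    refine ⟨0, Nat.mul_pos dpos npos, ?_, ?_⟩
    · have : ((d*n : ℕ) : ZMod d) = 0 := by
        push_cast; rw [ZMod.natCast_self]; ring
      rw [this, Nat.cast_zero]
    · rw [xSeq_dn hsum hμ]
      rfl

lemma Aset_isChart (hsum : ∑ τ : ZMod d, mfun τ = (m : ℤ)) (hμ : memP d n m μ) :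
    IsChart d n mfun (Aset d n mfun μ) := by
  refine ⟨?_, ?_, ?_, ?_⟩
  · exact ⟨((0 : ZMod d), 0), 0, Nat.mul_pos dpos npos, by simp, by simp [xSeq], by simp [xSeq]⟩
  · have hne : ((Finset.range (d*n)).image (xSeq d n mfun μ)).Nonempty :=
      ⟨xSeq d n mfun μ 0, Finset.mem_image_of_mem _ (Finset.mem_range.2 (Nat.mul_pos dpos npos))⟩
    refine ⟨((Finset.range (d*n)).image (xSeq d n mfun μ)).min' hne, ?_⟩
    rintro p ⟨j, hj, _, _, hle⟩
    exact le_trans (Finset.min'_le _ _ (Finset.mem_image_of_mem _ (Finset.mem_range.2 hj))) hle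
  · rintro p ⟨j, hj, hcopy, ⟨c, hc⟩, hle⟩
    obtain ⟨j0, hj0, hcopy0, hval0⟩ := hrep hsum hμ (k := j+1) hj
    refine ⟨j0, hj0, ?_, ?_, ?_⟩ <;> dsimp only
    · rw [hcopy0]; push_cast; rw [hcopy]
    · refine ⟨c + muSeq d n μ (j+1), ?_⟩
      rw [hval0, xSeq, ← hcopy]
      push_cast
      linarith
    · rw [hval0]
      have := xSeq_succ_le (mfun := mfun) hμ j
      rw [← hcopy]
      have hx : xSeq d n mfun μ (j+1) = xSeq d n mfun μ j + mfun ((j : ℕ) : ZMod d)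
          - (n : ℤ) * muSeq d n μ (j+1) := by rw [xSeq]
      linarith
  · rintro p ⟨j, hj, hcopy, ⟨c, hc⟩, hle⟩
    refine ⟨j, hj, hcopy, ?_, ?_⟩ <;> dsimp only
    · exact ⟨c + 1, by push_cast; linarith⟩
    · have : (0:ℤ) ≤ n := Int.ofNat_nonneg n
      linarith

lemma xSeq_inj (hn : 0 < n) (hmn : Nat.Coprime m n) (hsum : ∑ τ : ZMod d, mfun τ = (m : ℤ))
    {j j' : ℕ} (hj : j < d*n) (hj' : j' < d*n)
    (hcopy : ((j : ℕ) : ZMod d) = ((j' : ℕ) : ZMod d))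
    (hdvd : (n : ℤ) ∣ (xSeq d n mfun μ j - xSeq d n mfun μ j')) : j = j' := by
  have hmod : j % d = j' % d := by
    have := (ZMod.natCast_eq_natCast_iff j j' d).1 hcopy
    exact this
  have hi : j / d < n := by rw [Nat.div_lt_iff_lt_mul dpos]; rwa [mul_comm] at hj
  have hi' : j' / d < n := by rw [Nat.div_lt_iff_lt_mul dpos]; rwa [mul_comm] at hj'
  have ej : j % d + (j / d) * d = j := by rw [mul_comm]; exact Nat.mod_add_div j d
  have ej' : j' % d + (j' / d) * d = j' := by rw [mul_comm]; exact Nat.mod_add_div j' d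
  have hdvd2 : (n : ℤ) ∣ (xSeq d n mfun μ (j % d + (j / d) * d)
      - xSeq d n mfun μ (j % d + (j' / d) * d)) := by
    rw [ej, hmod, ej']
    exact hdvd
  have := seq_inj hn hmn hsum (xSeq d n mfun μ) xSeq_rec hi hi' hdvd2
  rw [← ej, ← ej', this, hmod]

lemma Aset_isLeast (hn : 0 < n) (hmn : Nat.Coprime m n)
    (hsum : ∑ τ : ZMod d, mfun τ = (m : ℤ)) {j : ℕ} (hj : j < d*n) :
    IsLeast (cls n (Aset d n mfun μ) ((j : ℕ) : ZMod d) (xSeq d n mfun μ j))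
      (xSeq d n mfun μ j) := by
  constructor
  · exact ⟨⟨j, hj, rfl, ⟨0, by ring⟩, le_refl _⟩, ⟨0, by ring⟩⟩
  · rintro y ⟨⟨j', hj', hcopy', hdvd', hle'⟩, hdvd⟩
    have h1 : (n : ℤ) ∣ (xSeq d n mfun μ j - xSeq d n mfun μ j') := by
      obtain ⟨c1, hc1⟩ := hdvd'
      obtain ⟨c2, hc2⟩ := hdvd
      exact ⟨c1 - c2, by push_cast at *; linarith⟩
    have := xSeq_inj hn hmn hsum hj hj' hcopy'.symm h1
    rw [this]
    exact hle'

lemma Bset_Aset (hn : 0 < n) (hmn : Nat.Coprime m n)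
    (hsum : ∑ τ : ZMod d, mfun τ = (m : ℤ)) (hμ : memP d n m μ) {τ : ZMod d} {y : ℤ} :
    (τ, y) ∈ Bset d n (Aset d n mfun μ) ↔
      ∃ j : ℕ, j < d*n ∧ ((j : ℕ) : ZMod d) = τ ∧ y = xSeq d n mfun μ j := by
  constructor
  · intro hy
    obtain ⟨j, hj, hcopy, hdvd, hle⟩ := hy.1
    refine ⟨j, hj, hcopy, ?_⟩
    have hL := Aset_isLeast (μ := μ) hn hmn hsum hj
    rw [hcopy] at hL
    exact Bset_eq_bmin hn (Aset_isChart hsum hμ) hL hy hdvd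
  · rintro ⟨j, hj, hcopy, rfl⟩
    have hL := Aset_isLeast (μ := μ) hn hmn hsum hj
    rw [hcopy] at hL
    exact bmin_mem_Bset hn (Aset_isChart hsum hμ) hL

lemma bseq_Aset (hn : 0 < n) (hmn : Nat.Coprime m n)
    (hsum : ∑ τ : ZMod d, mfun τ = (m : ℤ)) (hμ : memP d n m μ) :
    ∀ k : ℕ, k ≤ d*n → (bseq d n mfun (Aset d n mfun μ) k).2 = xSeq d n mfun μ k := by
  have hA := Aset_isChart (mfun := mfun) hsum hμ
  intro k
  induction k with
  | zero =>
      intro _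
      have h1 := bseq_zero_isLeast hn hmn hsum hA
      have h2 : IsLeast {x : ℤ | ((0 : ZMod d), x) ∈ Bset d n (Aset d n mfun μ)}
          (xSeq d n mfun μ 0) := by
        constructor
        · show ((0 : ZMod d), xSeq d n mfun μ 0) ∈ Bset d n (Aset d n mfun μ)
          exact (Bset_Aset hn hmn hsum hμ).2 ⟨0, Nat.mul_pos dpos npos, by simp, rfl⟩
        · intro y hy
          obtain ⟨j, hj, hcopy, rfl⟩ := (Bset_Aset hn hmn hsum hμ).1 hy
          have hdj : d ∣ j := (ZMod.natCast_eq_zero_iff j d).1 hcopy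
          obtain ⟨i, rfl⟩ := hdj
          have hi : i < n := Nat.lt_of_mul_lt_mul_left hj
          have : xSeq d n mfun μ 0 = 0 := rfl
          rw [this, mul_comm]
          exact xSeq_kd_nonneg hsum hμ (le_of_lt hi)
      exact h1.unique h2
  | succ k ih =>
      intro hk
      have hk' : k ≤ d*n := Nat.le_of_succ_le hk
      have e := (bseq_spec hn hmn hsum hA k).2
      rw [ih hk'] at e
      obtain ⟨j0, hj0, hcopy0, hval0⟩ := hrep hsum hμ (k := k+1) hk
      have hL2 : IsLeast (cls n (Aset d n mfun μ) (((k+1 : ℕ)) : ZMod d)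
          (xSeq d n mfun μ k + mfun ((k : ℕ) : ZMod d))) (xSeq d n mfun μ (k+1)) := by
        constructor
        · constructor
          · exact ⟨j0, hj0, hcopy0, ⟨0, by rw [hval0]; ring⟩, le_of_eq hval0⟩
          · exact ⟨-muSeq d n μ (k+1), by rw [xSeq]; ring⟩
        · rintro y ⟨⟨j', hj', hcopy', hdvd', hle'⟩, hdvd⟩
          have h1 : (n : ℤ) ∣ (xSeq d n mfun μ j0 - xSeq d n mfun μ j') := by
            obtain ⟨c1, hc1⟩ := hdvd'
            obtain ⟨c2, hc2⟩ := hdvd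
            refine ⟨c1 - c2 - muSeq d n μ (k+1), ?_⟩
            have hx : xSeq d n mfun μ (k+1) = xSeq d n mfun μ k + mfun ((k : ℕ) : ZMod d)
                - (n : ℤ) * muSeq d n μ (k+1) := by rw [xSeq]
            rw [hval0, hx]
            push_cast at *
            linarith
          have := xSeq_inj hn hmn hsum hj' hj0 (hcopy'.trans hcopy0.symm) (by
            obtain ⟨c, hc⟩ := h1; exact ⟨-c, by linarith⟩)
          rw [← hval0, ← this]
          exact hle'
      have hLb := bmin_isLeast hn hmn hsum hA (((k+1 : ℕ)) : ZMod d)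
        (xSeq d n mfun μ k + mfun ((k : ℕ) : ZMod d))
      rw [e]
      exact hLb.unique hL2

lemma typeTup_Aset (hn : 0 < n) (hmn : Nat.Coprime m n)
    (hsum : ∑ τ : ZMod d, mfun τ = (m : ℤ)) (hμ : memP d n m μ) :
    typeTup d n mfun (Aset d n mfun μ) = μ := by
  funext τ i
  have hidx : (τ : ℕ) + 1 + (i : ℕ) * d ≤ d * n := by
    have h1 : (i : ℕ) * d ≤ (n-1)*d := Nat.mul_le_mul_right d (by omega)
    have h2 : (τ : ℕ) + 1 ≤ d := τ.isLt
    have h3 : d + (n-1)*d = d*n := by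
      have : d + (n-1)*d = ((n-1)+1)*d := by ring
      rw [this, Nat.sub_add_cancel hn]
      ring
    calc (τ : ℕ) + 1 + (i : ℕ) * d ≤ d + (n-1)*d := by omega
      _ = d*n := h3
  set j := (τ : ℕ) + (i : ℕ) * d with hjdef
  have hj1 : (τ : ℕ) + 1 + (i : ℕ) * d = j + 1 := by rw [hjdef]; ring
  show typeInt d n mfun (Aset d n mfun μ) ((τ : ℕ) + 1 + (i : ℕ) * d) = μ τ i
  rw [hj1, typeInt_succ_eq, bseq_Aset hn hmn hsum hμ j (by omega),
    bseq_Aset hn hmn hsum hμ (j+1) (by omega)]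
  have hx : xSeq d n mfun μ j + mfun ((j : ℕ) : ZMod d) - xSeq d n mfun μ (j+1)
      = (n : ℤ) * muSeq d n μ (j+1) := by rw [xSeq]; ring
  rw [hx]
  have hn' : (n : ℤ) ≠ 0 := by exact_mod_cast hn.ne'
  rw [Int.mul_ediv_cancel_left _ hn']
  rw [hjdef, show (τ : ℕ) + (i : ℕ) * d + 1 = (τ : ℕ) + 1 + (i : ℕ) * d by ring,
    muSeq_idx (τ : ℕ) (i : ℕ) τ.isLt i.isLt]

end Surj

end ELP

/-- The assignment `A ↦ type A` induces a bijection from the set of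
equivalence classes of EL-charts onto `P_{m,n,d}` : the type is invariant under equivalence,
it lies in `P_{m,n,d}`, two EL-charts with the same type are equivalent, and every element of
`P_{m,n,d}` is the type of some EL-chart. -/
theorem type_bijection_classes_P
    (d n m : ℕ) [NeZero d] (hn : 0 < n) (hm : 0 < m) (hmn : Nat.Coprime m n)
    (mfun : ZMod d → ℤ) (hsum : ∑ τ : ZMod d, mfun τ = (m : ℤ)) :
    (∀ A A' : Set (ZMod d × ℤ), IsChart d n mfun A → IsChart d n mfun A' →
      ChartEquiv d A A' → typeTup d n mfun A = typeTup d n mfun A') ∧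
    (∀ A : Set (ZMod d × ℤ), IsChart d n mfun A → memP d n m (typeTup d n mfun A)) ∧
    (∀ A A' : Set (ZMod d × ℤ), IsChart d n mfun A → IsChart d n mfun A' →
      typeTup d n mfun A = typeTup d n mfun A' → ChartEquiv d A A') ∧
    (∀ μ : Fin d → Fin n → ℤ, memP d n m μ →
      ∃ A : Set (ZMod d × ℤ), IsChart d n mfun A ∧ typeTup d n mfun A = μ) := by
  haveI : NeZero n := ⟨hn.ne'⟩
  refine ⟨?_, ?_, ?_, ?_⟩
  · intro A A' hA hA' heq
    exact ELP.typeTup_shift_eq hn hmn hsum hA hA' heq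
  · intro A hA
    exact ELP.typeTup_memP hn hmn hsum hA
  · intro A A' hA hA' h
    exact ELP.typeTup_inj hn hmn hsum hA hA' h
  · intro μ hμ
    exact ⟨ELP.Aset d n mfun μ, ELP.Aset_isChart hsum hμ, ELP.typeTup_Aset hn hmn hsum hμ⟩
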